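/- The language L(⊡) is less expressive than the language L(⊞) on the class of all bimodal models, on the class of serial bimodal models, on the class of transitive bimodal models, and on the class of Euclidean bimodal models. Concretely: (i) for every φ ∈ L(⊡) there is ψ ∈ L(⊞) equivalent to φ on all bimodal models (namely ⊞φ ∧ ⊞¬φ for ⊡φ); and (ii) there exist two pointed bimodal models (M,s) and (M',s'), both serial, transitive and Euclidean, such that M,s ⊨ ⊞p and M',s' ⊭ ⊞p, while for every φ ∈ L(⊡), M,s ⊨ φ iff M',s' ⊨ φ. -/

import Mathlib

/-- Formulas built from propositional variables by ¬, ∧, ⊡ (`gbox`) and ⊞ (`pbox`). -/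
inductive Form : Type
  | var : ℕ → Form
  | neg : Form → Form
  | conj : Form → Form → Form
  | gbox : Form → Form
  | pbox : Form → Form

/-- A bimodal model: a nonempty set of worlds, two accessibility relations and a valuation. -/
structure BiModel : Type 1 where
  S : Type
  ne : Nonempty S
  R1 : S → S → Prop
  R2 : S → S → Prop
  V : ℕ → Set S

/-- Truth of a formula at a world. ⊡φ: all R1-successors and R2-successors agree
on φ. ⊞φ: either φ holds at all R1-successors, or ¬φ holds at all R2-successors. -/
def sat (M : BiModel) : M.S → Form → Prop
  | s, .var n => s ∈ M.V n
  | s, .neg φ => ¬ sat M s φ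
  | s, .conj φ ψ => sat M s φ ∧ sat M s ψ
  | s, .gbox φ => ∀ t u, M.R1 s t → M.R2 s u → (sat M t φ ↔ sat M u φ)
  | s, .pbox φ => (∀ t, M.R1 s t → sat M t φ) ∨ (∀ u, M.R2 s u → ¬ sat M u φ)

/-- φ belongs to the fragment L(⊡) (no occurrence of ⊞). -/
def Form.noPBox : Form → Prop
  | .var _ => True
  | .neg φ => φ.noPBox
  | .conj φ ψ => φ.noPBox ∧ ψ.noPBox
  | .gbox φ => φ.noPBox
  | .pbox _ => False

/-- φ belongs to the fragment L(⊞) (no occurrence of ⊡). -/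
def Form.noGBox : Form → Prop
  | .var _ => True
  | .neg φ => φ.noGBox
  | .conj φ ψ => φ.noGBox ∧ ψ.noGBox
  | .gbox _ => False
  | .pbox φ => φ.noGBox

/-- A model is serial if both relations are serial. -/
def SerialM (M : BiModel) : Prop := (∀ s, ∃ t, M.R1 s t) ∧ (∀ s, ∃ t, M.R2 s t)
/-- A model is transitive if both relations are transitive. -/
def TransM (M : BiModel) : Prop := Transitive M.R1 ∧ Transitive M.R2
/-- A model is Euclidean if both relations are Euclidean. -/
def EuclM (M : BiModel) : Prop :=
  (∀ x y z : M.S, M.R1 x y → M.R1 x z → M.R1 y z) ∧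
  (∀ x y z : M.S, M.R2 x y → M.R2 x z → M.R2 y z)
/-- A model is symmetric if both relations are symmetric. -/
def SymmM (M : BiModel) : Prop := Symmetric M.R1 ∧ Symmetric M.R2
/-- A model is reflexive if both relations are reflexive. -/
def ReflM (M : BiModel) : Prop := Reflexive M.R1 ∧ Reflexive M.R2

/-- Translation from L(⊡) into L(⊞): ⊡φ becomes ⊞Tφ ∧ ⊞¬Tφ. -/
def T : Form → Form
  | .var n => .var n
  | .neg φ => .neg (T φ)
  | .conj φ ψ => .conj (T φ) (T ψ)
  | .gbox φ => .conj (.pbox (T φ)) (.pbox (.neg (T φ)))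
  | .pbox φ => .pbox (T φ)

lemma T_noGBox : ∀ φ : Form, (T φ).noGBox := by
  intro φ
  induction φ <;> simp [T, Form.noGBox, *]

lemma T_equiv : ∀ (φ : Form) (M : BiModel) (s : M.S), sat M s φ ↔ sat M s (T φ) := by
  intro φ
  induction φ with
  | var n => intro M s; simp [T]
  | neg φ ih => intro M s; simp [T, sat, ih]
  | conj φ ψ ih1 ih2 => intro M s; simp [T, sat, ih1, ih2]
  | pbox φ ih => intro M s; simp [T, sat, ih]
  | gbox φ ih =>
    intro M s
    show (∀ t u, M.R1 s t → M.R2 s u → (sat M t φ ↔ sat M u φ)) ↔ _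
    simp only [T, sat, ih]
    constructor
    · intro h
      constructor
      · by_cases h1 : ∀ t, M.R1 s t → sat M t (T φ)
        · exact Or.inl h1
        · push_neg at h1
          obtain ⟨t, ht, htφ⟩ := h1
          exact Or.inr fun u hu hφu => htφ ((h t u ht hu).mpr hφu)
      · by_cases h1 : ∀ t, M.R1 s t → ¬ sat M t (T φ)
        · exact Or.inl h1
        · push_neg at h1
          obtain ⟨t, ht, htφ⟩ := h1
          exact Or.inr fun u hu hφu => hφu ((h t u ht hu).mp htφ)
    · rintro ⟨h1, h2⟩ t u ht hu
      constructor
      · intro hφt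
        rcases h2 with h2 | h2
        · exact absurd hφt (h2 t ht)
        · by_contra hφu; exact h2 u hu hφu
      · intro hφu
        rcases h1 with h1 | h1
        · exact h1 t ht
        · exact absurd hφu (h1 u hu)

/-- First model: R1 points to `true`, R2 points to `false`. -/
def Ma : BiModel :=
  ⟨Bool, ⟨true⟩, fun _ y => y = true, fun _ y => y = false, fun _ => {x | x = true}⟩

/-- Second model: relations swapped. -/
def Mb : BiModel :=
  ⟨Bool, ⟨true⟩, fun _ y => y = false, fun _ y => y = true, fun _ => {x | x = true}⟩

lemma Ma_Mb_agree : ∀ φ : Form, φ.noPBox → ∀ x : Bool, (sat Ma x φ ↔ sat Mb x φ) := by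
  intro φ
  induction φ with
  | var n => intro _ x; exact Iff.rfl
  | neg φ ih => intro h x; simp only [sat]; rw [ih h x]
  | conj φ ψ ih1 ih2 =>
    intro h x; simp only [sat]; rw [ih1 h.1 x, ih2 h.2 x]
  | pbox φ ih => intro h; exact absurd h (by simp [Form.noPBox])
  | gbox φ ih =>
    intro h x
    have hMa : sat Ma x (.gbox φ) ↔ (sat Ma true φ ↔ sat Ma false φ) := by
      constructor
      · intro h'; exact h' true false rfl rfl
      · intro h' t u ht hu
        simp only [Ma] at ht hu
        subst ht; subst hu; exact h'
    have hMb : sat Mb x (.gbox φ) ↔ (sat Mb false φ ↔ sat Mb true φ) := by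
      constructor
      · intro h'; exact h' false true rfl rfl
      · intro h' t u ht hu
        simp only [Mb] at ht hu
        subst ht; subst hu; exact h'
    rw [hMa, hMb, ih h true, ih h false]
    exact Iff.comm

/-- L(⊡) is less expressive than L(⊞) on the classes of all/serial/transitive/
Euclidean bimodal models: (i) every L(⊡)-formula has an L(⊞)-equivalent on all
models; (ii) there are two pointed models, both serial, transitive and Euclidean,
distinguished by the L(⊞)-formula ⊞p but not by any L(⊡)-formula. -/
theorem stmt3 :
  (∀ φ : Form, φ.noPBox →
      ∃ ψ : Form, ψ.noGBox ∧ ∀ (M : BiModel) (s : M.S), (sat M s φ ↔ sat M s ψ)) ∧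
    (∃ (M M' : BiModel) (s : M.S) (s' : M'.S),
      SerialM M ∧ TransM M ∧ EuclM M ∧
      SerialM M' ∧ TransM M' ∧ EuclM M' ∧
      sat M s (Form.pbox (Form.var 0)) ∧ ¬ sat M' s' (Form.pbox (Form.var 0)) ∧
      ∀ φ : Form, φ.noPBox → (sat M s φ ↔ sat M' s' φ)) := by
  constructor
  · intro φ _
    exact ⟨T φ, T_noGBox φ, fun M s => T_equiv φ M s⟩
  · refine ⟨Ma, Mb, true, true, ?_, ?_, ?_, ?_, ?_, ?_, ?_, ?_, ?_⟩
    · exact ⟨fun s => ⟨true, rfl⟩, fun s => ⟨false, rfl⟩⟩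
    · constructor <;> (intro a b c h1 h2; simpa [Ma] using h2)
    · constructor <;> (intro a b c h1 h2; simpa [Ma] using h2)
    · exact ⟨fun s => ⟨false, rfl⟩, fun s => ⟨true, rfl⟩⟩
    · constructor <;> (intro a b c h1 h2; simpa [Mb] using h2)
    · constructor <;> (intro a b c h1 h2; simpa [Mb] using h2)
    · left; intro t ht; simp only [Ma] at ht ⊢; subst ht; simp [sat, Ma]
    · intro h
      rcases h with h | h
      · exact absurd (h false rfl) (fun h' => Bool.false_ne_true h')
      · exact absurd (rfl : sat Mb true (.var 0)) (h true rfl)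
    · intro φ hφ; exact Ma_Mb_agree φ hφ true
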